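/- arXiv:1412.1645 — 3 statements merged into one kernel-verified Lean document; each statement's English description precedes it below -/
import Mathlib

section
/- Let G be an abelian group and define A_G : G^{ℤ≥0} → G^{ℤ≥0} by A_G(g) = (g_0, g_0g_1, g_1g_2, g_2g_3, …), i.e. A_G(g)_0 = g_0 and A_G(g)_k = g_{k-1}g_k for k ≥ 1 (a group automorphism of G^{ℤ≥0}). Then for every n ∈ ℤ, every k ≥ 0 and every g ∈ G^{ℤ≥0}, the n-th iterate (including negative n) satisfies A_G^n(g)_k = ∏_{j=0}^{k} g_j^{C(n, k−j)}, where C(n,i) is the generalised binomial coefficient. -/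
/-- Generalised binomial coefficient `C(n,k)` for integer `n`:
`n(n-1)⋯(n-k+1)/k!`, realised via `Ring.choose` on the binomial ring `ℤ`. -/
noncomputable def gchoose (n : ℤ) (k : ℕ) : ℤ := Ring.choose n k

lemma gchoose_zero (n : ℤ) : gchoose n 0 = 1 := Ring.choose_zero_right n

lemma gchoose_pascal (n : ℤ) (k : ℕ) :
    gchoose (n + 1) (k + 1) = gchoose n k + gchoose n (k + 1) :=
  Ring.choose_succ_succ n k

lemma step {G : Type*} [CommGroup G] (A : MulAut (ℕ → G))
    (hA : ∀ (g : ℕ → G) (k : ℕ), A g k = if k = 0 then g 0 else g (k - 1) * g k)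
    (n : ℤ) (g b : ℕ → G)
    (hb : ∀ k, b k = ∏ j ∈ Finset.range (k + 1), g j ^ gchoose n (k - j)) :
    ∀ k, A b k = ∏ j ∈ Finset.range (k + 1), g j ^ gchoose (n + 1) (k - j) := by
  intro k
  rw [hA]
  cases k with
  | zero =>
    simp [hb 0, gchoose_zero]
  | succ m =>
    simp only [Nat.succ_ne_zero, if_false, Nat.add_sub_cancel]
    rw [hb m, hb (m + 1)]
    rw [Finset.prod_range_succ (fun j => g j ^ gchoose n (m + 1 - j)) (m + 1),
        Finset.prod_range_succ (fun j => g j ^ gchoose (n + 1) (m + 1 - j)) (m + 1)]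
    have h1 : ∀ j ∈ Finset.range (m + 1),
        g j ^ gchoose (n + 1) (m + 1 - j) = g j ^ gchoose n (m - j) * g j ^ gchoose n (m + 1 - j) := by
      intro j hj
      rw [Finset.mem_range] at hj
      have : m + 1 - j = (m - j) + 1 := by omega
      rw [this, gchoose_pascal, zpow_add]
    rw [Finset.prod_congr rfl h1, Finset.prod_mul_distrib]
    simp [gchoose_zero, mul_comm, mul_assoc, mul_left_comm]

lemma step_inv {G : Type*} [CommGroup G] (A : MulAut (ℕ → G))
    (hA : ∀ (g : ℕ → G) (k : ℕ), A g k = if k = 0 then g 0 else g (k - 1) * g k)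
    (n : ℤ) (g b : ℕ → G)
    (hb : ∀ k, A b k = ∏ j ∈ Finset.range (k + 1), g j ^ gchoose (n + 1) (k - j)) :
    ∀ k, b k = ∏ j ∈ Finset.range (k + 1), g j ^ gchoose n (k - j) := by
  intro k
  induction k with
  | zero =>
    have := hb 0
    rw [hA] at this
    simpa [gchoose_zero] using this
  | succ m ih =>
    have h := hb (m + 1)
    rw [hA] at h
    simp only [Nat.succ_ne_zero, if_false, Nat.add_sub_cancel] at h
    have hbm : b (m + 1) = (b m)⁻¹ * ∏ j ∈ Finset.range (m + 2), g j ^ gchoose (n + 1) (m + 1 - j) := by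
      rw [← h]; group
    rw [hbm, ih]
    rw [Finset.prod_range_succ (fun j => g j ^ gchoose n (m + 1 - j)) (m + 1),
        Finset.prod_range_succ (fun j => g j ^ gchoose (n + 1) (m + 1 - j)) (m + 1)]
    have h1 : ∀ j ∈ Finset.range (m + 1),
        g j ^ gchoose (n + 1) (m + 1 - j) = g j ^ gchoose n (m - j) * g j ^ gchoose n (m + 1 - j) := by
      intro j hj
      rw [Finset.mem_range] at hj
      have : m + 1 - j = (m - j) + 1 := by omega
      rw [this, gchoose_pascal, zpow_add]
    rw [Finset.prod_congr rfl h1, Finset.prod_mul_distrib]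
    simp [gchoose_zero, mul_comm, mul_assoc, mul_left_comm]


/-- For a commutative group `G` and the automorphism `A` of `G^{ℤ≥0}` given by
`A(g) = (g_0, g_0 g_1, g_1 g_2, …)`, the `n`-th iterate (for `n : ℤ`) satisfies
`A^n(g)_k = ∏_{j=0}^k g_j ^ C(n, k-j)`. -/
theorem stmt0 {G : Type*} [CommGroup G] (A : MulAut (ℕ → G))
    (hA : ∀ (g : ℕ → G) (k : ℕ), A g k = if k = 0 then g 0 else g (k - 1) * g k)
    (n : ℤ) (k : ℕ) (g : ℕ → G) :
    (A ^ n) g k = ∏ j ∈ Finset.range (k + 1), g j ^ gchoose n (k - j) := by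
  induction n using Int.induction_on generalizing k with
  | zero =>
    simp only [zpow_zero]
    have : (1 : MulAut (ℕ → G)) g k = g k := rfl
    rw [this, Finset.prod_eq_single k]
    · simp [gchoose, Ring.choose_zero_right]
    · intro j hj hne
      rw [Finset.mem_range] at hj
      have hk : 0 < k - j := by omega
      rw [show gchoose 0 (k - j) = 0 from Ring.choose_zero_pos ℤ hk, zpow_zero]
    · intro h; exact absurd (Finset.self_mem_range_succ k) h
  | succ n ih =>
    have hpow : A ^ ((n : ℤ) + 1) = A * A ^ (n : ℤ) := by
      rw [← zpow_one_add]; ring_nf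
    rw [hpow]
    have : (A * A ^ (n : ℤ)) g k = A ((A ^ (n : ℤ)) g) k := rfl
    rw [this]
    exact step A hA n g ((A ^ (n : ℤ)) g) (fun k => ih k) k
  | pred n ih =>
    have hpow : A ^ (-(n : ℤ)) = A * A ^ (-(n : ℤ) - 1) := by
      rw [← zpow_one_add]; ring_nf
    have key : ∀ m, A ((A ^ (-(n : ℤ) - 1)) g) m
        = ∏ j ∈ Finset.range (m + 1), g j ^ gchoose ((-(n : ℤ) - 1) + 1) (m - j) := by
      intro m
      have : A ((A ^ (-(n : ℤ) - 1)) g) m = (A ^ (-(n : ℤ))) g m := by rw [hpow]; rfl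
      rw [this]
      have e : (-(n : ℤ) - 1) + 1 = -(n : ℤ) := by ring
      rw [e]
      exact ih m
    have := step_inv A hA (-(n : ℤ) - 1) g ((A ^ (-(n : ℤ) - 1)) g) key k
    exact this
end

section
/- Let (X,s) and (Y,u) be dynamical systems and let π : X → Y be a homomorphism. If g ∈ G_m(X,s) for some m ≥ 0 is such that g(x) = g(x′) whenever x, x′ ∈ X satisfy π(x) = π(x′), then there exists f ∈ G_m(Y,u) with g = f ∘ π. -/
noncomputable section

/-- The circle group 𝕋. -/
abbrev 𝕋 := Circle

/-- The groups `G_m(X,s)` of quasi-eigenfunctions of a dynamical system: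
`G_0` is the set of constant 𝕋-valued (continuous) functions, and
`G_{m+1} = {g continuous : g ∘ s = f · g for some f ∈ G_m}`. -/
def Gqe {X : Type*} [TopologicalSpace X] (s : X → X) : ℕ → Set (X → 𝕋)
  | 0 => {g | Continuous g ∧ ∃ c : 𝕋, g = fun _ => c}
  | m + 1 => {g | Continuous g ∧ ∃ f ∈ Gqe s m, ∀ x, g (s x) = f x * g x}

/-- If `π : (X,s) → (Y,u)` is a homomorphism of dynamical systems and
`g ∈ G_m(X,s)` is constant on the fibres of `π`, then `g = f ∘ π` for some
`f ∈ G_m(Y,u)`. -/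
theorem stmt10 {X Y : Type*} [TopologicalSpace X] [CompactSpace X] [T2Space X]
    [TopologicalSpace Y] [CompactSpace Y] [T2Space Y]
    (s : X ≃ₜ X) (u : Y ≃ₜ Y) (π : X → Y)
    (hπc : Continuous π) (hπs : Function.Surjective π)
    (hcomm : ∀ x, π (s x) = u (π x))
    (m : ℕ) (g : X → 𝕋) (hg : g ∈ Gqe ⇑s m)
    (hfib : ∀ x x', π x = π x' → g x = g x') :
    ∃ f ∈ Gqe ⇑u m, g = f ∘ π := by
  have hq : Topology.IsQuotientMap π := hπc.isClosedMap.isQuotientMap hπc hπs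
  induction m generalizing g with
  | zero =>
    obtain ⟨hgc, c, rfl⟩ := hg
    exact ⟨fun _ => c, ⟨continuous_const, c, rfl⟩, rfl⟩
  | succ m ih =>
    obtain ⟨hgc, h, hh, hrec⟩ := hg
    -- h is constant on fibres
    have hhfib : ∀ x x', π x = π x' → h x = h x' := by
      intro x x' hxx
      have h1 : g (s x) = g (s x') := by
        apply hfib; rw [hcomm, hcomm, hxx]
      have h2 := hrec x
      have h3 := hrec x'
      have h4 : g x = g x' := hfib _ _ hxx
      rw [h2, h3, h4] at h1
      exact mul_right_cancel h1
    obtain ⟨f', hf', hhf'⟩ := ih h hh hhfib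
    -- lift g
    set f : Y → 𝕋 := fun y => g (Function.surjInv hπs y) with hf
    have hfg : ∀ x, f (π x) = g x := fun x =>
      hfib _ _ (Function.surjInv_eq hπs (π x))
    have hfc : Continuous f := by
      rw [hq.continuous_iff]
      have : f ∘ π = g := funext hfg
      rw [this]; exact hgc
    refine ⟨f, ⟨hfc, f', hf', ?_⟩, funext fun x => (hfg x).symm⟩
    intro y
    obtain ⟨x, rfl⟩ := hπs y
    rw [← hcomm, hfg, hfg, hrec, hhf']
    rfl
end
end

section
/- Let X be a group carrying a compact Hausdorff topology (no continuity of the group operations is assumed), and let A, B ⊆ X be subgroups such that the relations R(A) = {(x,y) ∈ X×X : x⁻¹y ∈ A} and R(B) = {(x,y) ∈ X×X : x⁻¹y ∈ B} are closed in X×X. Suppose B is normal in X, so that AB is a subgroup of X. Then the relation R(AB) = {(x,y) ∈ X×X : x⁻¹y ∈ AB} is closed in X×X; equivalently, the quotient space X/(AB) is Hausdorff. -/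
open scoped Pointwise

/-- Let `X` be a group carrying a compact Hausdorff topology (no continuity of
the group operations assumed), and let `A, B` be subgroups whose quotient
relations `{(x,y) : x⁻¹y ∈ A}` and `{(x,y) : x⁻¹y ∈ B}` are closed. If `B` is
normal (so that `A·B` is a subgroup), then the quotient relation
`{(x,y) : x⁻¹y ∈ A·B}` is closed; equivalently, `X/(AB)` is Hausdorff. -/
theorem stmt17 {X : Type*} [Group X] [TopologicalSpace X] [CompactSpace X] [T2Space X]
    (A B : Subgroup X) (hB : B.Normal)
    (hA : IsClosed {p : X × X | p.1⁻¹ * p.2 ∈ A})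
    (hBcl : IsClosed {p : X × X | p.1⁻¹ * p.2 ∈ B}) :
    IsClosed {p : X × X | p.1⁻¹ * p.2 ∈ (A : Set X) * (B : Set X)} := by
  have hS : IsClosed {q : (X × X) × X | q.1.1⁻¹ * q.2 ∈ A ∧ q.2⁻¹ * q.1.2 ∈ B} := by
    apply IsClosed.inter
    · exact hA.preimage (by fun_prop : Continuous fun q : (X × X) × X => (q.1.1, q.2))
    · exact hBcl.preimage (by fun_prop : Continuous fun q : (X × X) × X => (q.2, q.1.2))
  have him := isClosedMap_fst_of_compactSpace _ hS
  convert him using 1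
  ext ⟨x, y⟩
  simp only [Set.mem_setOf_eq, Set.mem_image, Prod.exists]
  constructor
  · rintro ⟨a, ha, b, hb, hab⟩
    refine ⟨x, y, x * a, ⟨?_, ?_⟩, rfl⟩
    · rw [inv_mul_cancel_left]; exact ha
    · rw [show (x * a)⁻¹ * y = b by rw [mul_inv_rev, mul_assoc, ← hab, inv_mul_cancel_left]]
      exact hb
  · rintro ⟨x', y', z, ⟨h1, h2⟩, h⟩
    rw [Prod.ext_iff] at h
    obtain ⟨h3, h4⟩ := h
    dsimp at h3 h4
    subst h3; subst h4
    exact ⟨x'⁻¹ * z, h1, z⁻¹ * y', h2, by show x'⁻¹ * z * (z⁻¹ * y') = x'⁻¹ * y'; group⟩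
end
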